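/- For every finite simple graph G of order n, n ≤ 2·α(G) + k, where k is the maximum cardinality of a set of pairwise vertex-distinct odd cycles of G. -/

import Mathlib

variable {V : Type*} [Fintype V] [DecidableEq V]

/-- `S` is an independent set of `G`. -/
def IsIndep (G : SimpleGraph V) (S : Set V) : Prop :=
  ∀ ⦃u⦄, u ∈ S → ∀ ⦃v⦄, v ∈ S → ¬ G.Adj u v

/-- The independence number `α(G)`: the maximum cardinality of an independent set. -/
noncomputable def indepNum (G : SimpleGraph V) : ℕ :=
  sSup {n : ℕ | ∃ S : Set V, IsIndep G S ∧ S.ncard = n}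

/-- `S` is a maximum independent set of `G`. -/
def IsMaxIndep (G : SimpleGraph V) (S : Set V) : Prop :=
  IsIndep G S ∧ ∀ T : Set V, IsIndep G T → T.ncard ≤ S.ncard

/-- The neighborhood `N(X)` of a set of vertices `X`. -/
def nbhdSet (G : SimpleGraph V) (X : Set V) : Set V :=
  {v | ∃ u ∈ X, G.Adj u v}

/-- The difference `d_G(X) = |X| - |N(X)|` of a vertex set `X`. -/
noncomputable def diffSet (G : SimpleGraph V) (X : Set V) : ℤ :=
  (X.ncard : ℤ) - ((nbhdSet G X).ncard : ℤ)

/-- `I` is a critical independent set of `G`. -/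
def IsCriticalIndep (G : SimpleGraph V) (I : Set V) : Prop :=
  IsIndep G I ∧ ∀ J : Set V, IsIndep G J → diffSet G J ≤ diffSet G I

/-- `I` is a maximum-cardinality critical independent set of `G`. -/
def IsMaxCriticalIndep (G : SimpleGraph V) (I : Set V) : Prop :=
  IsCriticalIndep G I ∧ ∀ J : Set V, IsCriticalIndep G J → J.ncard ≤ I.ncard

/-- `core(G)`: the intersection of all maximum independent sets of `G`. -/
def coreSet (G : SimpleGraph V) : Set V := ⋂₀ {S : Set V | IsMaxIndep G S}

/-- `corona(G)`: the union of all maximum independent sets of `G`. -/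
def coronaSet (G : SimpleGraph V) : Set V := ⋃₀ {S : Set V | IsMaxIndep G S}

/-- `ker(G)`: the intersection of all critical independent sets of `G`. -/
def kerSet (G : SimpleGraph V) : Set V := ⋂₀ {S : Set V | IsCriticalIndep G S}

/-- `diadem(G)`: the union of all critical independent sets of `G`. -/
def diademSet (G : SimpleGraph V) : Set V := ⋃₀ {S : Set V | IsCriticalIndep G S}

/-- `nucleus(G)`: the intersection of all maximum-cardinality critical independent
sets of `G`. -/
def nucleusSet (G : SimpleGraph V) : Set V := ⋂₀ {S : Set V | IsMaxCriticalIndep G S}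

/-- `C` is the vertex set of some odd cycle of `G`. -/
def IsOddCycleVertexSet (G : SimpleGraph V) (C : Set V) : Prop :=
  ∃ (v : V) (w : G.Walk v v), w.IsCycle ∧ Odd w.length ∧ {x | x ∈ w.support} = C

/-- The maximum cardinality of a set of pairwise vertex-distinct odd cycles of `G`,
i.e. the number of distinct vertex sets of odd cycles of `G`. -/
noncomputable def numVertexDistinctOddCycles (G : SimpleGraph V) : ℕ :=
  {C : Set V | IsOddCycleVertexSet G C}.ncard

/-- `E` is the edge set of some odd cycle of `G`. -/
def IsOddCycleEdgeSet (G : SimpleGraph V) (E : Set (Sym2 V)) : Prop :=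
  ∃ (v : V) (w : G.Walk v v), w.IsCycle ∧ Odd w.length ∧ {e | e ∈ w.edges} = E

/-- The number of (distinct) odd cycles of `G`, where a cycle is identified with
its edge set. -/
noncomputable def numOddCycles (G : SimpleGraph V) : ℕ :=
  {E : Set (Sym2 V) | IsOddCycleEdgeSet G E}.ncard

section Aux

set_option linter.unusedSectionVars false
set_option maxHeartbeats 1000000

open SimpleGraph

lemma aux_path_edge_not_mem {G : SimpleGraph V} {u v : V} (p : G.Walk u v)
    (hp : p.IsPath) (hlen : p.length ≠ 1) : s(u, v) ∉ p.edges := by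
  intro he
  cases p with
  | nil => simp at he
  | @cons _ x _ h q =>
    rw [Walk.edges_cons, List.mem_cons] at he
    rcases he with he | he
    · have hvx : v = x := (Sym2.congr_right).mp he
      subst hvx
      have : q = Walk.nil := Walk.isPath_iff_eq_nil.mp hp.of_cons
      subst this
      simp at hlen
    · rw [Walk.cons_isPath_iff] at hp
      exact hp.2 (q.fst_mem_support_of_mem_edges he)

lemma aux_split {G : SimpleGraph V} {x v : V} (r : G.Walk x v) (hxr : x ∈ r.support.tail) :
    ∃ (b : G.Walk x x) (c : G.Walk x v), b.length + c.length = r.length ∧ 1 ≤ b.length ∧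
      (∀ y ∈ b.support, y ∈ r.support) ∧ (∀ y ∈ c.support, y ∈ r.support) := by
  cases r with
  | nil => simp at hxr
  | @cons _ y _ h' r₂ =>
    have hxr₂ : x ∈ r₂.support := by simpa using hxr
    refine ⟨Walk.cons h' (r₂.takeUntil x hxr₂), r₂.dropUntil x hxr₂, ?_, ?_, ?_, ?_⟩
    · have := congrArg Walk.length (r₂.take_spec hxr₂)
      rw [Walk.length_append] at this
      simp only [Walk.length_cons]
      omega
    · simp [Walk.length_cons]
    · intro z hz
      simp only [Walk.support_cons, List.mem_cons] at hz ⊢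
      rcases hz with rfl | hz
      · left; rfl
      · exact Or.inr (r₂.support_takeUntil_subset hxr₂ hz)
    · intro z hz
      simp only [Walk.support_cons, List.mem_cons]
      exact Or.inr (r₂.support_dropUntil_subset hxr₂ hz)

lemma aux_exists_odd_cycle {G : SimpleGraph V} :
    ∀ (n : ℕ) (v : V) (w : G.Walk v v), w.length = n → Odd n →
      ∃ (x : V) (c : G.Walk x x), c.IsCycle ∧ Odd c.length ∧
        ∀ y ∈ c.support, y ∈ w.support := by
  intro n
  induction n using Nat.strong_induction_on with
  | _ n ih =>
    intro v w hlen hodd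
    by_cases hcyc : w.IsCycle
    · exact ⟨v, w, hcyc, hlen ▸ hodd, fun y hy => hy⟩
    cases w with
    | nil =>
      simp only [Walk.length_nil] at hlen
      subst hlen; exact absurd hodd (by simp)
    | @cons _ u _ h p =>
      -- h : G.Adj v u, p : G.Walk u v
      have hlen' : p.length + 1 = n := by simpa using hlen
      by_cases hp : p.IsPath
      · exfalso
        have hne : s(v, u) ∈ p.edges := by
          by_contra hne
          exact hcyc ((Walk.cons_isCycle_iff p h).mpr ⟨hp, hne⟩)
        have h1 : p.length ≠ 1 := by
          intro h1
          rw [h1] at hlen'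
          rw [← hlen', Nat.odd_iff] at hodd
          omega
        exact aux_path_edge_not_mem p hp h1 (Sym2.eq_swap ▸ hne)
      · -- p has a duplicate vertex
        have hnd : ¬ p.support.Nodup := fun hnd => hp ((Walk.isPath_def p).mpr hnd)
        obtain ⟨x, hdup⟩ := List.exists_duplicate_iff_not_nodup.mpr hnd
        have hcount : 2 ≤ p.support.count x := List.duplicate_iff_two_le_count.mp hdup
        have hx : x ∈ p.support := hdup.mem
        have hspec : (p.takeUntil x hx).append (p.dropUntil x hx) = p := p.take_spec hx
        have hxr : x ∈ (p.dropUntil x hx).support.tail := by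
          have h1 : (p.takeUntil x hx).support.count x = 1 :=
            p.count_support_takeUntil_eq_one hx
          by_contra hxr
          have h2 : p.support.count x = 1 := by
            conv_lhs => rw [← hspec]
            rw [Walk.support_append, List.count_append, h1,
              List.count_eq_zero_of_not_mem hxr]
          omega
        obtain ⟨b, c, hbc, hbpos, hbsub, hcsub⟩ := aux_split (p.dropUntil x hx) hxr
        have hlenqr : (p.takeUntil x hx).length + (p.dropUntil x hx).length = p.length := by
          have := congrArg Walk.length hspec
          rwa [Walk.length_append] at this
        set A : G.Walk x x := c.append (Walk.cons h (p.takeUntil x hx)) with hA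
        have hAlen : A.length = c.length + ((p.takeUntil x hx).length + 1) := by
          simp [hA, Walk.length_append]
        have hsum : A.length + b.length = n := by omega
        have hApos : 1 ≤ A.length := by omega
        have hdropsub : ∀ z ∈ (p.dropUntil x hx).support, z ∈ (Walk.cons h p).support := by
          intro z hz
          simp only [Walk.support_cons, List.mem_cons]
          exact Or.inr (p.support_dropUntil_subset hx hz)
        have hsubA : ∀ y ∈ A.support, y ∈ (Walk.cons h p).support := by
          intro z hz
          rw [hA, Walk.mem_support_append_iff] at hz
          rcases hz with hz | hz
          · exact hdropsub z (hcsub z hz)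
          · simp only [Walk.support_cons, List.mem_cons] at hz ⊢
            rcases hz with rfl | hz
            · left; rfl
            · exact Or.inr (p.support_takeUntil_subset hx hz)
        have hsubB : ∀ y ∈ b.support, y ∈ (Walk.cons h p).support :=
          fun z hz => hdropsub z (hbsub z hz)
        have hor : Odd A.length ∨ Odd b.length := by
          rcases Nat.even_or_odd A.length with hA' | hA'
          · right
            rw [Nat.odd_iff] at hodd ⊢
            rw [Nat.even_iff] at hA'
            omega
          · left; exact hA'
        rcases hor with hodd' | hodd'
        · obtain ⟨z, cz, h1, h2, h3⟩ := ih A.length (by omega) x A rfl hodd'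
          exact ⟨z, cz, h1, h2, fun y hy => hsubA y (h3 y hy)⟩
        · obtain ⟨z, cz, h1, h2, h3⟩ := ih b.length (by omega) x b rfl hodd'
          exact ⟨z, cz, h1, h2, fun y hy => hsubB y (h3 y hy)⟩


lemma aux_bipartite (G : SimpleGraph V) :
    ∀ (n : ℕ) (S : Set V), S.ncard = n →
      (∀ (v : V) (w : G.Walk v v), (∀ y ∈ w.support, y ∈ S) → ¬ Odd w.length) →
      ∃ T : Set V, T ⊆ S ∧ IsIndep G T ∧ S.ncard ≤ 2 * T.ncard := by
  intro n
  induction n using Nat.strong_induction_on with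
  | _ n ih =>
    intro S hS hno
    rcases Set.eq_empty_or_nonempty S with rfl | ⟨v, hv⟩
    · exact ⟨∅, subset_rfl, fun u hu => absurd hu (by simp), by simp⟩
    set K : Set V := {u | ∃ p : G.Walk v u, ∀ y ∈ p.support, y ∈ S} with hKdef
    set K₀ : Set V :=
      {u | ∃ p : G.Walk v u, (∀ y ∈ p.support, y ∈ S) ∧ Even p.length} with hK0def
    set K₁ : Set V :=
      {u | ∃ p : G.Walk v u, (∀ y ∈ p.support, y ∈ S) ∧ Odd p.length} with hK1def
    have hKS : K ⊆ S := by
      rintro u ⟨p, hp⟩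
      exact hp u p.end_mem_support
    have hvK : v ∈ K := ⟨Walk.nil, by simpa using hv⟩
    have hKunion : K ⊆ K₀ ∪ K₁ := by
      rintro u ⟨p, hp⟩
      rcases Nat.even_or_odd p.length with he | he
      · exact Or.inl ⟨p, hp, he⟩
      · exact Or.inr ⟨p, hp, he⟩
    have hK0K : K₀ ⊆ K := by rintro u ⟨p, hp, _⟩; exact ⟨p, hp⟩
    have hK1K : K₁ ⊆ K := by rintro u ⟨p, hp, _⟩; exact ⟨p, hp⟩
    -- independence of the parity classes
    have hindep : ∀ (par : ℕ → Prop), (par = Even ∨ par = Odd) →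
        IsIndep G {u | ∃ p : G.Walk v u, (∀ y ∈ p.support, y ∈ S) ∧ par p.length} := by
      rintro par hpar u ⟨p, hp, hpe⟩ w ⟨q, hq, hqe⟩ hadj
      set W : G.Walk v v := p.append (Walk.cons hadj q.reverse) with hW
      have hWsup : ∀ y ∈ W.support, y ∈ S := by
        intro y hy
        rw [hW, Walk.mem_support_append_iff] at hy
        rcases hy with hy | hy
        · exact hp y hy
        · simp only [Walk.support_cons, List.mem_cons, Walk.support_reverse,
            List.mem_reverse] at hy
          rcases hy with rfl | hy
          · exact hp y p.end_mem_support
          · exact hq y hy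
      have hWlen : W.length = p.length + (q.length + 1) := by
        simp [hW, Walk.length_append]
      have : Odd W.length := by
        rw [hWlen]
        rcases hpar with rfl | rfl
        · rcases hpe with ⟨a, ha⟩; rcases hqe with ⟨b, hb⟩
          exact ⟨a + b, by omega⟩
        · rcases hpe with ⟨a, ha⟩; rcases hqe with ⟨b, hb⟩
          exact ⟨a + b + 1, by omega⟩
      exact hno v W hWsup this
    have hindep0 : IsIndep G K₀ := hindep Even (Or.inl rfl)
    have hindep1 : IsIndep G K₁ := hindep Odd (Or.inr rfl)
    -- disjointness
    have hdisj : Disjoint K₀ K₁ := by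
      rw [Set.disjoint_left]
      rintro u ⟨p, hp, hpe⟩ ⟨q, hq, hqe⟩
      set W : G.Walk v v := p.append q.reverse with hW
      have hWsup : ∀ y ∈ W.support, y ∈ S := by
        intro y hy
        rw [hW, Walk.mem_support_append_iff] at hy
        rcases hy with hy | hy
        · exact hp y hy
        · rw [Walk.support_reverse, List.mem_reverse] at hy
          exact hq y hy
      refine hno v W hWsup ?_
      have : W.length = p.length + q.length := by simp [hW, Walk.length_append]
      rw [this]
      exact hpe.add_odd hqe
    -- closure: no edges out of K into S
    have hclose : ∀ u ∈ K, ∀ w ∈ S, G.Adj u w → w ∈ K := by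
      rintro u ⟨p, hp⟩ w hw hadj
      refine ⟨p.concat hadj, ?_⟩
      intro y hy
      have hy' : y ∈ p.support ∨ y = w := by
        rw [Walk.support_concat, List.mem_append] at hy
        simpa using hy
      rcases hy' with hy | rfl
      · exact hp y hy
      · exact hw
    -- apply induction hypothesis to S \ K
    have hKfin : K.Finite := Set.toFinite K
    have hKpos : 0 < K.ncard := (Set.ncard_pos hKfin).mpr ⟨v, hvK⟩
    have hcard : (S \ K).ncard + K.ncard = S.ncard :=
      Set.ncard_diff_add_ncard_of_subset hKS (Set.toFinite S)
    obtain ⟨T', hT'sub, hT'indep, hT'card⟩ :=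
      ih (S \ K).ncard (by omega) (S \ K) rfl
        (fun x w hw => hno x w (fun y hy => (hw y hy).1))
    -- pick the larger parity class
    have hKle : K.ncard ≤ K₀.ncard + K₁.ncard := by
      calc K.ncard ≤ (K₀ ∪ K₁).ncard := Set.ncard_le_ncard hKunion (Set.toFinite _)
        _ ≤ K₀.ncard + K₁.ncard := Set.ncard_union_le _ _
    obtain ⟨L, hLK, hLindep, hLcard⟩ :
        ∃ L : Set V, L ⊆ K ∧ IsIndep G L ∧ K.ncard ≤ 2 * L.ncard := by
      rcases le_total K₀.ncard K₁.ncard with hle | hle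
      · exact ⟨K₁, hK1K, hindep1, by omega⟩
      · exact ⟨K₀, hK0K, hindep0, by omega⟩
    refine ⟨T' ∪ L, ?_, ?_, ?_⟩
    · exact Set.union_subset (hT'sub.trans Set.diff_subset) (hLK.trans hKS)
    · intro a ha b hb hadj
      rcases ha with ha | ha
      · rcases hb with hb | hb
        · exact hT'indep ha hb hadj
        · exact (hT'sub ha).2 (hclose b (hLK hb) a (hT'sub ha).1 hadj.symm)
      · rcases hb with hb | hb
        · exact (hT'sub hb).2 (hclose a (hLK ha) b (hT'sub hb).1 hadj)
        · exact hLindep ha hb hadj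
    · have hdisj2 : Disjoint T' L := by
        rw [Set.disjoint_left]
        intro a ha hb
        exact (hT'sub ha).2 (hLK hb)
      rw [Set.ncard_union_eq hdisj2 (Set.toFinite _) (Set.toFinite _)]
      omega


lemma aux_main (G : SimpleGraph V) :
    ∀ (n : ℕ) (S : Set V), S.ncard = n →
      ∃ T : Set V, T ⊆ S ∧ IsIndep G T ∧
        S.ncard ≤ 2 * T.ncard + {C : Set V | IsOddCycleVertexSet G C ∧ C ⊆ S}.ncard := by
  intro n
  induction n using Nat.strong_induction_on with
  | _ n ih =>
    intro S hS
    by_cases hcyc : ∃ (v : V) (w : G.Walk v v), w.IsCycle ∧ Odd w.length ∧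
        ∀ y ∈ w.support, y ∈ S
    · obtain ⟨v, w, hwc, hwodd, hwsup⟩ := hcyc
      have hvS : v ∈ S := hwsup v w.start_mem_support
      have hSpos : 0 < S.ncard := (Set.ncard_pos (Set.toFinite S)).mpr ⟨v, hvS⟩
      have hcard : (S \ {v}).ncard = S.ncard - 1 :=
        Set.ncard_diff_singleton_of_mem hvS
      obtain ⟨T, hTsub, hTindep, hTcard⟩ :=
        ih (S \ {v}).ncard (by omega) (S \ {v}) rfl
      set C : Set V := {x | x ∈ w.support} with hC
      have hCmem : C ∈ {D : Set V | IsOddCycleVertexSet G D ∧ D ⊆ S} :=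
        ⟨⟨v, w, hwc, hwodd, rfl⟩, fun x hx => hwsup x hx⟩
      have hCnot : C ∉ {D : Set V | IsOddCycleVertexSet G D ∧ D ⊆ S \ {v}} := by
        rintro ⟨-, hsub⟩
        exact (hsub (w.start_mem_support : v ∈ C)).2 rfl
      have hins : insert C {D : Set V | IsOddCycleVertexSet G D ∧ D ⊆ S \ {v}} ⊆
          {D : Set V | IsOddCycleVertexSet G D ∧ D ⊆ S} := by
        rintro D (rfl | ⟨hD, hsub⟩)
        · exact hCmem
        · exact ⟨hD, hsub.trans Set.diff_subset⟩
      have hle : {D : Set V | IsOddCycleVertexSet G D ∧ D ⊆ S \ {v}}.ncard + 1 ≤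
          {D : Set V | IsOddCycleVertexSet G D ∧ D ⊆ S}.ncard := by
        rw [← Set.ncard_insert_of_notMem hCnot (Set.toFinite _)]
        exact Set.ncard_le_ncard hins (Set.toFinite _)
      exact ⟨T, hTsub.trans Set.diff_subset, hTindep, by omega⟩
    · push_neg at hcyc
      have hno : ∀ (v : V) (w : G.Walk v v), (∀ y ∈ w.support, y ∈ S) → ¬ Odd w.length := by
        intro v w hsup hodd
        obtain ⟨x, c, hc, hcodd, hcsub⟩ := aux_exists_odd_cycle w.length v w rfl hodd
        obtain ⟨y, hy1, hy2⟩ := hcyc x c hc hcodd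
        exact hy2 (hsup y (hcsub y hy1))
      obtain ⟨T, hTsub, hTindep, hTcard⟩ := aux_bipartite G n S hS hno
      exact ⟨T, hTsub, hTindep, by omega⟩


end Aux

/-- For every finite simple graph `G` of order `n`,
`n ≤ 2·α(G) + k`, where `k` is the maximum cardinality of a set of pairwise
vertex-distinct odd cycles of `G`. -/
theorem card_le_two_alpha_add_vertexDistinctOddCycles (G : SimpleGraph V) :
    Fintype.card V ≤ 2 * indepNum G + numVertexDistinctOddCycles G := by
  obtain ⟨T, -, hTindep, hTcard⟩ := aux_main G (Set.univ : Set V).ncard Set.univ rfl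
  have huniv : (Set.univ : Set V).ncard = Fintype.card V := by
    rw [Set.ncard_univ, Nat.card_eq_fintype_card]
  have hcycuniv : {C : Set V | IsOddCycleVertexSet G C ∧ C ⊆ Set.univ} =
      {C : Set V | IsOddCycleVertexSet G C} := by
    ext C; simp
  have hT : T.ncard ≤ indepNum G := by
    apply le_csSup
    · refine ⟨Fintype.card V, ?_⟩
      rintro m ⟨S, -, rfl⟩
      calc S.ncard ≤ (Set.univ : Set V).ncard :=
            Set.ncard_le_ncard (Set.subset_univ S) (Set.toFinite _)
        _ = Fintype.card V := huniv
    · exact ⟨T, hTindep, rfl⟩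
  rw [huniv, hcycuniv] at hTcard
  unfold numVertexDistinctOddCycles
  omega
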